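/- Let (W,S) be a Coxeter system, I ⊆ S, and x ∈ W^I a minimal length coset representative. Then x·⟨I⟩_{W_I}·x⁻¹ = ⟨xIx⁻¹⟩, i.e., conjugating the Bruhat preclosure (computed in W_I) of the simple reflections I by x equals the Bruhat preclosure in W of the conjugated set xIx⁻¹. -/

import Mathlib

/- Common definitions: reflections, inversion sets, Bruhat graph paths, Bruhat preclosure,
   twisted inversion sets, twisted lengths, twisted Bruhat graph/order, reflection orders,
   initial sections, and the right weak order, for a Coxeter system `cs`. -/

namespace CoxeterSystem

variable {B : Type*} {W : Type*} [Group W] {M : CoxeterMatrix B}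
variable (cs : CoxeterSystem M W)

/-- The set of reflections `T`. -/
def reflSet : Set W := {t | cs.IsReflection t}

/-- The inversion set `N(w) = {t ∈ T : ℓ(tw) < ℓ(w)}`. -/
def invSet (w : W) : Set W :=
  {t | cs.IsReflection t ∧ cs.length (t * w) < cs.length w}

/-- One step in the Bruhat graph using only edges labelled (on the right) by elements of `A`:
`u → u * t` with `t ∈ A` a reflection and `ℓ(u) < ℓ(u * t)`. -/
def AStep (A : Set W) (u v : W) : Prop :=
  ∃ t ∈ A, cs.IsReflection t ∧ v = u * t ∧ cs.length u < cs.length v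

/-- The (right) Bruhat preclosure `⟨A⟩`: reflections reachable from the identity by a path in the
Bruhat graph all of whose edge labels lie in `A`. -/
def bclosure (A : Set W) : Set W :=
  {t | cs.IsReflection t ∧ Relation.ReflTransGen (cs.AStep A) 1 t}

/-- The twisted inversion set `w · A = N(w) △ w A w⁻¹`. -/
def twisted (w : W) (A : Set W) : Set W :=
  symmDiff (cs.invSet w) ((fun x => w * x * w⁻¹) '' A)

/-- The twisted length `ℓ_A(v, w) = ℓ(w v⁻¹) - 2 |N(v w⁻¹) ∩ v · A|`. -/
noncomputable def tlen (A : Set W) (v w : W) : ℤ :=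
  (cs.length (w * v⁻¹) : ℤ) - 2 * ((cs.invSet (v * w⁻¹)) ∩ cs.twisted v A).ncard

/-- The one-argument twisted length `ℓ_A(w) = ℓ_A(e, w) = ℓ(w) - 2 |N(w⁻¹) ∩ A|`. -/
noncomputable def tlen₀ (A : Set W) (w : W) : ℤ :=
  (cs.length w : ℤ) - 2 * ((cs.invSet w⁻¹) ∩ A).ncard

/-- An edge of the twisted Bruhat graph `Ω_{(W,A)}`: Bruhat graph edges with labels not in `A`,
and reversed Bruhat graph edges with labels in `A`. -/
def TwEdge (A : Set W) (u v : W) : Prop :=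
  (∃ t, cs.IsReflection t ∧ t ∉ A ∧ v = u * t ∧ cs.length u < cs.length v) ∨
  (∃ t, cs.IsReflection t ∧ t ∈ A ∧ u = v * t ∧ cs.length v < cs.length u)

/-- The twisted Bruhat order `u ≤_A v`: reachability in the twisted Bruhat graph. -/
def tle (A : Set W) (u v : W) : Prop := Relation.ReflTransGen (cs.TwEdge A) u v

/-- A reflection subgroup: a subgroup generated by the reflections it contains. -/
def IsReflectionSubgroup (W' : Subgroup W) : Prop :=
  W' = Subgroup.closure ((W' : Set W) ∩ cs.reflSet)

/-- The canonical generators `χ(W') = {t ∈ T : N(t) ∩ W' = {t}}` of a reflection subgroup. -/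
def chi (W' : Subgroup W) : Set W :=
  {t | cs.IsReflection t ∧ cs.invSet t ∩ (W' : Set W) = {t}}

/-- A reflection order: a strict total order on the set of reflections such that for every
dihedral reflection subgroup `W'` with canonical generators `{r, s}`, `r ≠ s`, if `r ≺ s` then
every reflection of `W'` lies (weakly) between `r` and `s`.  (This betweenness condition for
*all* dihedral reflection subgroups is equivalent to the alternating-chain condition
`r ≺ rsr ≺ ⋯ ≺ srs ≺ s`.) -/
def IsReflectionOrder (lt : W → W → Prop) : Prop :=
  (∀ t ∈ cs.reflSet, ¬ lt t t) ∧
  (∀ t₁ ∈ cs.reflSet, ∀ t₂ ∈ cs.reflSet, ∀ t₃ ∈ cs.reflSet,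
      lt t₁ t₂ → lt t₂ t₃ → lt t₁ t₃) ∧
  (∀ t₁ ∈ cs.reflSet, ∀ t₂ ∈ cs.reflSet, t₁ = t₂ ∨ lt t₁ t₂ ∨ lt t₂ t₁) ∧
  (∀ W' : Subgroup W, cs.IsReflectionSubgroup W' →
    ∀ r s : W, cs.chi W' = {r, s} → r ≠ s → lt r s →
      ∀ t ∈ (W' : Set W) ∩ cs.reflSet, (t = r ∨ lt r t) ∧ (t = s ∨ lt t s))

/-- `A` is an initial section of some reflection order. -/
def IsInitialSection (A : Set W) : Prop :=
  A ⊆ cs.reflSet ∧ ∃ lt : W → W → Prop, cs.IsReflectionOrder lt ∧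
    ∀ a ∈ A, ∀ b ∈ cs.reflSet \ A, lt a b

/-- The right weak order, characterized by containment of inversion sets. -/
def wle (u v : W) : Prop := cs.invSet u ⊆ cs.invSet v

/-- `j` is the join `u ∨_R v` in the right weak order. -/
def IsJoin (u v j : W) : Prop :=
  cs.wle u j ∧ cs.wle v j ∧ ∀ z : W, cs.wle u z → cs.wle v z → cs.wle j z

/-- The Bruhat preclosure computed inside a subgroup `H` of `W` (for a standard parabolic
subgroup `H = W_I`, the length function and the reflections of `W_I` are the restrictions of
those of `W`, so this is the Bruhat preclosure of the Coxeter system `(W_I, I)`). -/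
def bclosureIn (H : Subgroup W) (A : Set W) : Set W :=
  {t | cs.IsReflection t ∧ t ∈ H ∧
    Relation.ReflTransGen (fun u v => u ∈ H ∧ v ∈ H ∧ cs.AStep A u v) 1 t}

end CoxeterSystem

open List

namespace CoxAux

variable {B : Type*} {W : Type*} [Group W] {M : CoxeterMatrix B} (cs : CoxeterSystem M W)

local prefix:100 "s" => cs.simple
local prefix:100 "π" => cs.wordProd
local prefix:100 "ℓ" => cs.length

/-- Conjugation-precomposition automorphism of `W → ℤˣ`. -/
def caut (w : W) : MulAut (W → ℤˣ) where
  toFun f := fun t => f (w⁻¹ * t * w)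
  invFun f := fun t => f (w * t * w⁻¹)
  left_inv f := by funext t; group
  right_inv f := by funext t; group
  map_mul' f g := rfl

@[simp] lemma caut_apply (w : W) (f : W → ℤˣ) (t : W) : caut w f t = f (w⁻¹ * t * w) := rfl

def cphi : W →* MulAut (W → ℤˣ) where
  toFun := caut
  map_one' := by ext f t; simp
  map_mul' u v := by ext f t; simp [mul_assoc]

@[simp] lemma cphi_apply (w : W) (f : W → ℤˣ) (t : W) : cphi w f t = f (w⁻¹ * t * w) := rfl

open scoped Classical in
/-- `-1` at `r`, `1` elsewhere. -/
noncomputable def deltaOf (r : W) : W → ℤˣ := fun t => if t = r then -1 else 1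

lemma cphi_deltaOf (w r : W) : cphi w (deltaOf r) = deltaOf (w * r * w⁻¹) := by
  classical
  funext t
  simp only [cphi_apply, deltaOf]
  have : w⁻¹ * t * w = r ↔ t = w * r * w⁻¹ := by
    constructor
    · intro h; rw [← h]; group
    · rintro rfl; group
  simp [this]

lemma deltaOf_mul_self (r : W) : deltaOf r * deltaOf r = 1 := by
  classical
  funext t
  simp only [deltaOf, Pi.mul_apply, Pi.one_apply]
  split <;> simp

abbrev G (W : Type*) [Group W] := SemidirectProduct (W → ℤˣ) W (cphi (W := W))

lemma sd_pow (a : W → ℤˣ) (g : W) (n : ℕ) :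
    (⟨a, g⟩ : G W) ^ n = ⟨∏ k ∈ Finset.range n, cphi (g ^ k) a, g ^ n⟩ := by
  induction n with
  | zero =>
    congr 1 <;> simp
  | succ n ih =>
    rw [pow_succ', ih, SemidirectProduct.mul_def]
    congr 1
    · show a * cphi g (∏ k ∈ Finset.range n, cphi (g ^ k) a) = _
      rw [map_prod, Finset.prod_range_succ']
      simp only [pow_zero, map_one]
      rw [mul_comm]
      congr 1
      apply Finset.prod_congr rfl
      intro k _
      rw [← MulAut.mul_apply, ← map_mul, ← pow_succ']
    · show g * g ^ n = g ^ (n + 1); rw [pow_succ']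

end CoxAux

namespace CoxAux

variable {B : Type*} {W : Type*} [Group W] {M : CoxeterMatrix B} (cs : CoxeterSystem M W)

local prefix:100 "s" => cs.simple
local prefix:100 "π" => cs.wordProd
local prefix:100 "ℓ" => cs.length

noncomputable def sgnF : B → G W := fun i => ⟨deltaOf (s i), s i⟩

lemma si_conj_pow (i j : B) (k : ℕ) :
    (s i * s j) ^ k * s i * ((s i * s j) ^ k)⁻¹ = (s i * s j) ^ (2 * k) * s i := by
  have h1 : s i * (s i * s j)⁻¹ = (s i * s j) * s i := by
    rw [mul_inv_rev, cs.inv_simple, cs.inv_simple, ← mul_assoc, mul_assoc]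
  have key : ∀ k : ℕ, s i * ((s i * s j) ^ k)⁻¹ = (s i * s j) ^ k * s i := by
    intro k
    induction k with
    | zero => simp
    | succ k ih =>
      rw [pow_succ, mul_inv_rev, ← mul_assoc, h1, mul_assoc, ih, ← mul_assoc, ← pow_succ', ← pow_succ]
  rw [mul_assoc, key, two_mul, pow_add, mul_assoc]

lemma liftable : M.IsLiftable (sgnF cs) := by
  intro i j
  set m := M i j with hm
  have hmul : sgnF cs i * sgnF cs j
      = (⟨deltaOf (s i) * deltaOf (s i * s j * s i), s i * s j⟩ : G W) := by
    rw [sgnF, sgnF, SemidirectProduct.mul_def]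
    congr 1
    rw [cphi_deltaOf, cs.inv_simple]
  rw [hmul, sd_pow]
  set c := s i * s j with hc
  have hcm : c ^ m = 1 := cs.simple_mul_simple_pow i j
  have hterm : ∀ k : ℕ, cphi (c ^ k) (deltaOf (s i) * deltaOf (s i * s j * s i))
      = deltaOf (c ^ (2 * k) * s i) * deltaOf (c ^ (2 * k + 1) * s i) := by
    intro k
    rw [map_mul, cphi_deltaOf, cphi_deltaOf]
    congr 1
    · rw [si_conj_pow]
    · apply congrArg deltaOf
      calc c ^ k * (s i * s j * s i) * (c ^ k)⁻¹
          = c * (c ^ k * s i * (c ^ k)⁻¹) := by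
            rw [show s i * s j * s i = c * s i from by rw [hc], ← mul_assoc,
              ← pow_succ, pow_succ']
            group
        _ = c ^ (2 * k + 1) * s i := by
            rw [si_conj_pow cs i j, ← mul_assoc, ← pow_succ']
  have hprod : ∏ k ∈ Finset.range m, cphi (c ^ k) (deltaOf (s i) * deltaOf (s i * s j * s i))
      = ∏ l ∈ Finset.range (2 * m), deltaOf (c ^ l * s i) := by
    induction m with
    | zero => simp
    | succ n ih =>
      rw [Finset.prod_range_succ, ih, hterm, Nat.mul_succ, Finset.prod_range_succ,
        Finset.prod_range_succ, mul_assoc]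
  have hper : ∏ l ∈ Finset.range (2 * m), deltaOf ((c : W) ^ l * s i) = 1 := by
    rw [two_mul, Finset.prod_range_add, ← Finset.prod_mul_distrib]
    apply Finset.prod_eq_one
    intro l _
    rw [pow_add, hcm, one_mul, deltaOf_mul_self]
  rw [hprod, hper]
  congr 1 <;> simp [hcm]

noncomputable def mu : W →* G W := (CoxeterSystem.lift cs) ⟨sgnF cs, liftable cs⟩

lemma mu_simple (i : B) : mu cs (s i) = sgnF cs i :=
  CoxeterSystem.lift_apply_simple cs (liftable cs) i

lemma mu_right (w : W) : (mu cs w).right = w := by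
  have : (SemidirectProduct.rightHom.comp (mu cs) : W →* W) = MonoidHom.id W := by
    apply cs.ext_simple
    intro i
    simp [mu_simple, sgnF]
  calc (mu cs w).right = (SemidirectProduct.rightHom.comp (mu cs)) w := rfl
  _ = w := by rw [this]; rfl

/-- The sign of `t` in (any word for) `w`: `-1` iff `t` is a left inversion of `w`. -/
noncomputable def sgn (w t : W) : ℤˣ := (mu cs w).left t

lemma sgn_mul (u v t : W) : sgn cs (u * v) t = sgn cs u t * sgn cs v (u⁻¹ * t * u) := by
  unfold sgn
  rw [map_mul, SemidirectProduct.mul_left]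
  have : (mu cs u).right = u := mu_right cs u
  rw [this]
  rfl

open scoped Classical in
lemma sgn_simple (i : B) (t : W) : sgn cs (s i) t = if t = s i then -1 else 1 := by
  classical
  unfold sgn
  rw [mu_simple]
  rfl

lemma sgn_sq (w t : W) : sgn cs w t * sgn cs w t = 1 := Int.units_mul_self _

lemma sgn_inv_conj (w t : W) : sgn cs w t = sgn cs w⁻¹ (w⁻¹ * t * w) := by
  have h : sgn cs (w * w⁻¹) t = 1 := by
    rw [mul_inv_cancel]
    unfold sgn; rw [map_one]; rfl
  rw [sgn_mul] at h
  rcases Int.units_eq_one_or (sgn cs w t) with h1 | h1 <;>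
    rcases Int.units_eq_one_or (sgn cs w⁻¹ (w⁻¹ * t * w)) with h2 | h2 <;>
      rw [h1, h2] at h ⊢ <;> simp_all

end CoxAux

namespace CoxAux

variable {B : Type*} {W : Type*} [Group W] {M : CoxeterMatrix B} (cs : CoxeterSystem M W)

local prefix:100 "s" => cs.simple
local prefix:100 "π" => cs.wordProd
local prefix:100 "ℓ" => cs.length

lemma leftInvSeq_cons (i : B) (ω : List B) :
    cs.leftInvSeq (i :: ω) = s i :: List.map (MulAut.conj (s i)) (cs.leftInvSeq ω) := rfl

lemma sgn_one (t : W) : sgn cs 1 t = 1 := by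
  unfold sgn; rw [map_one]; rfl

lemma conj_simple_cancel (i : B) (u : W) : (MulAut.conj (s i)) (s i * u * s i) = u := by
  simp only [MulAut.conj_apply, cs.inv_simple, mul_assoc, cs.simple_mul_simple_cancel_left,
    cs.simple_mul_simple_self, mul_one]

lemma mem_map_conj_iff (i : B) (u : W) (l : List W) :
    u ∈ List.map (MulAut.conj (s i)) l ↔ s i * u * s i ∈ l := by
  rw [List.mem_map]
  constructor
  · rintro ⟨a, ha, rfl⟩
    have : s i * (MulAut.conj (s i)) a * s i = a := by
      simp only [MulAut.conj_apply, cs.inv_simple, mul_assoc, cs.simple_mul_simple_cancel_left,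
        cs.simple_mul_simple_self, mul_one]
    rwa [this]
  · intro hm
    exact ⟨s i * u * s i, hm, conj_simple_cancel cs i u⟩

lemma sgn_eq_one_of_not_mem (ω : List B) (t : W) (h : t ∉ cs.leftInvSeq ω) :
    sgn cs (π ω) t = 1 := by
  induction ω generalizing t with
  | nil => simpa using sgn_one cs t
  | cons i ω ih =>
    rw [leftInvSeq_cons, List.mem_cons] at h
    push_neg at h
    obtain ⟨h1, h2⟩ := h
    rw [cs.wordProd_cons, sgn_mul, cs.inv_simple]
    have h3 : s i * t * s i ∉ cs.leftInvSeq ω := fun hm => h2 ((mem_map_conj_iff cs i t _).mpr hm)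
    rw [ih _ h3, sgn_simple, if_neg h1, mul_one]

lemma sgn_eq_neg_one_of_mem (ω : List B) (t : W) (hnd : (cs.leftInvSeq ω).Nodup)
    (h : t ∈ cs.leftInvSeq ω) : sgn cs (π ω) t = -1 := by
  induction ω generalizing t with
  | nil => simp at h
  | cons i ω ih =>
    rw [leftInvSeq_cons] at h hnd
    rw [cs.wordProd_cons, sgn_mul, cs.inv_simple]
    rw [List.nodup_cons] at hnd
    rcases List.mem_cons.mp h with rfl | hmem
    · rw [cs.simple_mul_simple_self, one_mul, sgn_simple, if_pos rfl]
      have h5 : s i ∉ cs.leftInvSeq ω := by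
        intro hm
        apply hnd.1
        have : (s i : W) = (MulAut.conj (s i)) (s i) := by
          simp [MulAut.conj_apply, cs.inv_simple, mul_assoc,
            cs.simple_mul_simple_cancel_left]
        have h6 := List.mem_map_of_mem (f := ⇑(MulAut.conj (s i))) hm
        rwa [← this] at h6
      rw [sgn_eq_one_of_not_mem cs ω _ h5, mul_one]
    · have hne : t ≠ s i := by
        rintro rfl
        exact hnd.1 hmem
      rw [sgn_simple, if_neg hne, one_mul]
      exact ih _ (List.Nodup.of_map _ hnd.2) ((mem_map_conj_iff cs i t _).mp hmem)

end CoxAux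

namespace CoxAux

variable {B : Type*} {W : Type*} [Group W] {M : CoxeterMatrix B} (cs : CoxeterSystem M W)

local prefix:100 "s" => cs.simple
local prefix:100 "π" => cs.wordProd
local prefix:100 "ℓ" => cs.length

lemma sgn_refl_self {t : W} (ht : cs.IsReflection t) : sgn cs t t = -1 := by
  obtain ⟨y, i, rfl⟩ := ht
  set t := y * s i * y⁻¹ with hts
  have h1 : y⁻¹ * t * y = s i := by rw [hts]; group
  have h2 : t = y * (s i * y⁻¹) := by rw [hts]; group
  rw [h2, sgn_mul]
  rw [← h2, h1, sgn_mul, cs.inv_simple]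
  have h3 : s i * s i * s i = s i := by rw [cs.simple_mul_simple_self, one_mul]
  rw [h3, sgn_simple, if_pos rfl]
  have h4 : sgn cs y⁻¹ (s i) = sgn cs y t := by
    rw [sgn_inv_conj cs y t, h1]
  rw [h4]
  rcases Int.units_eq_one_or (sgn cs y t) with h | h <;> rw [h] <;> decide

lemma isLeftInversion_iff_sgn {t : W} (ht : cs.IsReflection t) (w : W) :
    ℓ (t * w) < ℓ w ↔ sgn cs w t = -1 := by
  constructor
  · intro hlt
    by_contra hne
    replace hne : sgn cs w t = 1 := by
      rcases Int.units_eq_one_or (sgn cs w t) with h | h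
      · exact h
      · exact absurd h hne
    have hw : w = t * (t * w) := by rw [← mul_assoc, ht.mul_self, one_mul]
    have h5 : t⁻¹ * t * t = t := by rw [ht.inv, ht.mul_self, one_mul]
    have h6 : sgn cs w t = sgn cs t t * sgn cs (t * w) t := by
      conv_lhs => rw [hw]
      rw [sgn_mul, h5]
    rw [hne, sgn_refl_self cs ht] at h6
    have h7 : sgn cs (t * w) t = -1 := by
      rcases Int.units_eq_one_or (sgn cs (t * w) t) with h | h
      · rw [h] at h6; exact absurd h6 (by decide)
      · exact h
    -- then ℓ (t * (t * w)) < ℓ (t * w), i.e. ℓ w < ℓ (t * w)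
    obtain ⟨ω, hred, hpi⟩ := cs.exists_reduced_word' (t * w)
    have hmem : t ∈ cs.leftInvSeq ω := by
      by_contra hnm
      rw [hpi, sgn_eq_one_of_not_mem cs ω t hnm] at h7
      exact absurd h7 (by decide)
    have := cs.isLeftInversion_of_mem_leftInvSeq hred hmem
    rw [← hpi] at this
    have h8 := this.2
    rw [← hw] at h8
    omega
  · intro hsgn
    obtain ⟨ω, hred, hpi⟩ := cs.exists_reduced_word' w
    have hmem : t ∈ cs.leftInvSeq ω := by
      by_contra hnm
      rw [hpi, sgn_eq_one_of_not_mem cs ω t hnm] at hsgn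
      exact absurd hsgn (by decide)
    have := cs.isLeftInversion_of_mem_leftInvSeq hred hmem
    rw [← hpi] at this
    exact this.2

lemma isRightInversion_iff_sgn {t : W} (ht : cs.IsReflection t) (w : W) :
    ℓ (w * t) < ℓ w ↔ sgn cs w⁻¹ t = -1 := by
  have h1 : ℓ (w * t) = ℓ (t * w⁻¹) := by
    rw [← cs.length_inv (w * t), mul_inv_rev, ht.inv]
  rw [h1, ← cs.length_inv w]
  exact isLeftInversion_iff_sgn cs ht w⁻¹

lemma mem_rightInvSeq_iff {ω : List B} (hred : cs.IsReduced ω) {t : W}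
    (ht : cs.IsReflection t) :
    t ∈ cs.rightInvSeq ω ↔ ℓ (π ω * t) < ℓ (π ω) := by
  rw [isRightInversion_iff_sgn cs ht, ← cs.wordProd_reverse]
  have hred' : cs.IsReduced ω.reverse := (cs.isReduced_reverse_iff ω).mpr hred
  have hnd : (cs.leftInvSeq ω.reverse).Nodup := hred'.nodup_leftInvSeq
  constructor
  · intro hmem
    apply sgn_eq_neg_one_of_mem cs _ _ hnd
    rw [cs.leftInvSeq_reverse, List.mem_reverse]
    exact hmem
  · intro hsgn
    by_contra hnm
    rw [sgn_eq_one_of_not_mem cs _ _ (by rwa [cs.leftInvSeq_reverse, List.mem_reverse])] at hsgn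
    exact absurd hsgn (by decide)

end CoxAux

namespace CoxAux

variable {B : Type*} {W : Type*} [Group W] {M : CoxeterMatrix B} (cs : CoxeterSystem M W)

local prefix:100 "s" => cs.simple
local prefix:100 "π" => cs.wordProd
local prefix:100 "ℓ" => cs.length

lemma wordProd_mem_closure (I : Set B) {ω : List B} (hω : ∀ b ∈ ω, b ∈ I) :
    π ω ∈ Subgroup.closure (cs.simple '' I) := by
  induction ω with
  | nil => rw [cs.wordProd_nil]; exact one_mem _
  | cons i ω ih =>
    rw [cs.wordProd_cons]
    exact mul_mem (Subgroup.subset_closure ⟨i, hω i (by simp), rfl⟩)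
      (ih fun b hb => hω b (by simp [hb]))

lemma exists_word_of_mem_closure (I : Set B) {w : W}
    (hw : w ∈ Subgroup.closure (cs.simple '' I)) :
    ∃ ω : List B, (∀ b ∈ ω, b ∈ I) ∧ π ω = w := by
  induction hw using Subgroup.closure_induction with
  | mem w hw =>
    obtain ⟨i, hi, rfl⟩ := hw
    exact ⟨[i], by simpa using hi, by simp⟩
  | one => exact ⟨[], by simp, by simp⟩
  | mul u v _ _ ihu ihv =>
    obtain ⟨ω₁, h1, rfl⟩ := ihu
    obtain ⟨ω₂, h2, rfl⟩ := ihv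
    refine ⟨ω₁ ++ ω₂, ?_, by rw [cs.wordProd_append]⟩
    intro b hb
    rcases List.mem_append.mp hb with h | h
    · exact h1 b h
    · exact h2 b h
  | inv u _ ihu =>
    obtain ⟨ω, h1, rfl⟩ := ihu
    exact ⟨ω.reverse, fun b hb => h1 b (List.mem_reverse.mp hb), by rw [cs.wordProd_reverse]⟩

lemma rightInvSeq_append (ω₁ ω₂ : List B) :
    cs.rightInvSeq (ω₁ ++ ω₂)
      = (cs.rightInvSeq ω₁).map (fun t => (π ω₂)⁻¹ * t * π ω₂) ++ cs.rightInvSeq ω₂ := by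
  induction ω₁ with
  | nil => simp
  | cons i ω₁ ih =>
    show ((π (ω₁ ++ ω₂))⁻¹ * s i * π (ω₁ ++ ω₂)) :: cs.rightInvSeq (ω₁ ++ ω₂) = _
    rw [ih, cs.wordProd_append]
    simp only [List.map_cons, List.cons_append, mul_inv_rev]
    congr 1
    group

lemma exists_reduced_word_in (I : Set B) :
    ∀ (n : ℕ) (ω : List B), ω.length ≤ n → (∀ b ∈ ω, b ∈ I) →
    ∃ ω' : List B, cs.IsReduced ω' ∧ (∀ b ∈ ω', b ∈ I) ∧ π ω' = π ω := by
  intro n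
  induction n with
  | zero =>
    intro ω hlen _
    have : ω = [] := List.length_eq_zero_iff.mp (Nat.le_zero.mp hlen)
    subst this
    exact ⟨[], by simp [CoxeterSystem.IsReduced], by simp, rfl⟩
  | succ n ih =>
    intro ω hlen hI
    by_cases hred : cs.IsReduced ω
    · exact ⟨ω, hred, hI, rfl⟩
    · have hων : ω ≠ [] := by
        rintro rfl
        exact hred (by simp [CoxeterSystem.IsReduced])
      have hP : ¬ cs.IsReduced (ω.take (ω.length - 1 + 1)) := by
        rwa [Nat.sub_add_cancel (by
          exact List.length_pos_iff.mpr hων), List.take_length]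
      have hex : ∃ k, ¬ cs.IsReduced (ω.take (k + 1)) := ⟨ω.length - 1, hP⟩
      classical
      let k₀ := Nat.find hex
      have hk₀ : ¬ cs.IsReduced (ω.take (k₀ + 1)) := Nat.find_spec hex
      have hk₀le : k₀ ≤ ω.length - 1 := Nat.find_le hP
      have hk₀lt : k₀ < ω.length := by
        have := List.length_pos_iff.mpr hων
        omega
      have hτred : cs.IsReduced (ω.take k₀) := by
        rcases Nat.eq_zero_or_pos k₀ with h | h
        · rw [h]; simp [CoxeterSystem.IsReduced]
        · have := Nat.find_min hex (m := k₀ - 1) (by omega)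
          push_neg at this
          rwa [Nat.sub_add_cancel h] at this
      set τ := ω.take k₀ with hτ
      set b := ω.get ⟨k₀, hk₀lt⟩ with hb
      have htake : ω.take (k₀ + 1) = τ ++ [b] := by
        rw [hτ, hb, List.take_succ]
        congr
        rw [List.getElem?_eq_getElem hk₀lt]
        rfl
      have hτlen : τ.length = k₀ := by
        rw [hτ, List.length_take]
        omega
      have hℓτ : ℓ (π τ) = k₀ := by
        have h := hτred
        rw [CoxeterSystem.IsReduced] at h
        rw [h, hτlen]
      have hπsucc : π (ω.take (k₀ + 1)) = π τ * s b := by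
        rw [htake, cs.wordProd_append, cs.wordProd_singleton]
      have hdesc : ℓ (π τ * s b) < ℓ (π τ) := by
        rcases cs.length_mul_simple (π τ) b with h | h
        · exfalso
          apply hk₀
          show ℓ (π (ω.take (k₀ + 1))) = (ω.take (k₀ + 1)).length
          rw [hπsucc, h, hℓτ, List.length_take]
          omega
        · omega
      have hk₀pos : 1 ≤ k₀ := by
        by_contra h
        have : k₀ = 0 := by omega
        rw [this] at hℓτ
        omega
      have hmem : s b ∈ cs.rightInvSeq τ :=
        (mem_rightInvSeq_iff cs hτred (cs.isReflection_simple b)).mpr hdesc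
      obtain ⟨j, hj, hgetj⟩ := List.getElem_of_mem hmem
      have hjτ : j < τ.length := by
        rw [cs.length_rightInvSeq] at hj
        exact hj
      have hgetD : (cs.rightInvSeq τ).getD j 1 = s b := by
        rw [List.getD_eq_getElem _ _ hj, hgetj]
      have herase : π τ * s b = π (τ.eraseIdx j) := by
        rw [← hgetD, cs.wordProd_mul_getD_rightInvSeq]
      set ω₂ := τ.eraseIdx j ++ ω.drop (k₀ + 1) with hω₂
      have hπω₂ : π ω₂ = π ω := by
        conv_rhs => rw [← List.take_append_drop (k₀ + 1) ω]
        rw [hω₂, cs.wordProd_append, cs.wordProd_append, ← herase, hπsucc]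
      have hlens : ω₂.length ≤ n := by
        rw [hω₂, List.length_append, List.length_eraseIdx_of_lt hjτ, hτlen, List.length_drop]
        omega
      have hIω₂ : ∀ b' ∈ ω₂, b' ∈ I := by
        intro b' hb'
        rcases List.mem_append.mp hb' with h | h
        · exact hI b' ((List.take_sublist k₀ ω).mem ((List.eraseIdx_sublist τ j).mem h))
        · exact hI b' ((List.drop_sublist (k₀ + 1) ω).mem h)
      obtain ⟨ω', hred', hI', hπ'⟩ := ih ω₂ hlens hIω₂
      exact ⟨ω', hred', hI', hπ'.trans hπω₂⟩
-- checkpoint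
end CoxAux

namespace CoxAux

variable {B : Type*} {W : Type*} [Group W] {M : CoxeterMatrix B} (cs : CoxeterSystem M W)

local prefix:100 "s" => cs.simple
local prefix:100 "π" => cs.wordProd
local prefix:100 "ℓ" => cs.length

/-- Splitting a nonidentity element of the standard parabolic as `w' * s j` with everything
reduced and in `I`. -/
lemma parabolic_split (I : Set B) {w : W} (hw : w ∈ Subgroup.closure (cs.simple '' I))
    (hne : w ≠ 1) :
    ∃ (w' : W) (j : B), j ∈ I ∧ w' ∈ Subgroup.closure (cs.simple '' I) ∧
      w = w' * s j ∧ ℓ w' + 1 = ℓ w ∧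
      ∃ ρ : List B, cs.IsReduced ρ ∧ (∀ b ∈ ρ, b ∈ I) ∧ π ρ = w' := by
  obtain ⟨ω, hωI, hπω⟩ := exists_word_of_mem_closure cs I hw
  obtain ⟨ωr, hred, hIr, hπr⟩ := exists_reduced_word_in cs I ω.length ω le_rfl hωI
  rw [hπω] at hπr
  have hner : ωr ≠ [] := by
    rintro rfl
    exact hne (by rw [← hπr, cs.wordProd_nil])
  set j := ωr.getLast hner with hj
  set ρ := ωr.dropLast with hρ
  have hsplit : ρ ++ [j] = ωr := List.dropLast_append_getLast hner
  have hρred : cs.IsReduced ρ := by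
    have : ρ = ωr.take (ωr.length - 1) := by rw [hρ, List.dropLast_eq_take]
    rw [this]
    exact hred.take _
  have hρI : ∀ b ∈ ρ, b ∈ I := fun b hb => hIr b ((List.dropLast_sublist ωr).mem hb)
  have hρlen : ρ.length = ωr.length - 1 := by rw [hρ, List.length_dropLast]
  have hπsplit : w = π ρ * s j := by
    rw [← hπr, ← hsplit, cs.wordProd_append, cs.wordProd_singleton]
  refine ⟨π ρ, j, hIr j (ωr.getLast_mem hner), wordProd_mem_closure cs I hρI, hπsplit, ?_,
    ρ, hρred, hρI, rfl⟩
  have h1 : ℓ (π ρ) = ρ.length := hρred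
  have h2 : ℓ w = ωr.length := by rw [← hπr]; exact hred
  have h3 : 0 < ωr.length := List.length_pos_iff.mpr hner
  omega

/-- The key parabolic fact: if `x` has no right descents in `I`, then
lengths add for `x * w`, `w ∈ W_I`. -/
lemma length_mul_parabolic_additive (I : Set B) (x : W)
    (hx : ∀ i ∈ I, ℓ x < ℓ (x * s i)) :
    ∀ w ∈ Subgroup.closure (cs.simple '' I), ℓ (x * w) = ℓ x + ℓ w := by
  classical
  set H := Subgroup.closure (cs.simple '' I) with hH
  have hex : ∃ n : ℕ, ∃ w ∈ H, ℓ (x * w) = n := ⟨ℓ x, 1, one_mem _, by rw [mul_one]⟩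
  set n₀ := Nat.find hex with hn₀
  obtain ⟨w₀, hw₀H, hw₀len⟩ := Nat.find_spec hex
  have hmin : ∀ w ∈ H, n₀ ≤ ℓ (x * w) := by
    intro w hwH
    by_contra h
    exact Nat.find_min hex (by omega : ℓ (x * w) < n₀) ⟨w, hwH, rfl⟩
  set x₀ := x * w₀ with hx₀
  -- additivity for the minimal representative x₀
  have key : ∀ (n : ℕ) (w : W), w ∈ H → ℓ w ≤ n → ℓ (x₀ * w) = ℓ x₀ + ℓ w := by
    intro n
    induction n with
    | zero =>
      intro w _ hlen
      have : w = 1 := cs.length_eq_zero_iff.mp (Nat.le_zero.mp hlen)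
      subst this
      simp
    | succ n ih =>
      intro w hwH hlen
      by_cases hne : w = 1
      · subst hne; simp
      · obtain ⟨w', j, hjI, hw'H, hsplit, hlen', ρ, hρred, hρI, hπρ⟩ :=
          parabolic_split cs I hwH hne
        have ihw' : ℓ (x₀ * w') = ℓ x₀ + ℓ w' := ih w' hw'H (by omega)
        have hws : ℓ (w' * s j) = ℓ w' + 1 := by rw [← hsplit]; omega
        rw [hsplit, ← mul_assoc]
        rcases cs.length_mul_simple (x₀ * w') j with h | h
        · rw [h, ihw']; omega
        · -- descent case: contradiction
          exfalso
          obtain ⟨ω₀, hω₀red, hπω₀⟩ := cs.exists_reduced_word' x₀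
          have hρρ : π (ω₀ ++ ρ) = x₀ * w' := by
            rw [cs.wordProd_append, ← hπω₀, hπρ]
          have hccred : cs.IsReduced (ω₀ ++ ρ) := by
            show ℓ (π (ω₀ ++ ρ)) = _
            rw [hρρ, ihw', List.length_append]
            have h1 : ℓ x₀ = ω₀.length := by rw [hπω₀]; exact hω₀red
            have h2 : ℓ w' = ρ.length := by rw [← hπρ]; exact hρred
            omega
          have hdesc : ℓ (π (ω₀ ++ ρ) * s j) < ℓ (π (ω₀ ++ ρ)) := by
            rw [hρρ, ihw']
            omega
          have hmem : s j ∈ cs.rightInvSeq (ω₀ ++ ρ) :=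
            (mem_rightInvSeq_iff cs hccred (cs.isReflection_simple j)).mpr hdesc
          rw [rightInvSeq_append] at hmem
          rcases List.mem_append.mp hmem with h2 | h2
          · -- s j = w'⁻¹ * r * w' with r a right inversion of x₀
            obtain ⟨r, hrmem, hrconj⟩ := List.mem_map.mp h2
            have hrrefl : cs.IsReflection r := cs.isReflection_of_mem_rightInvSeq ω₀ hrmem
            have hrinv : ℓ (π ω₀ * r) < ℓ (π ω₀) :=
              (mem_rightInvSeq_iff cs hω₀red hrrefl).mp hrmem
            rw [← hπω₀] at hrinv
            have hrH : r ∈ H := by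
              have : r = w' * s j * w'⁻¹ := by
                rw [← hrconj, hπρ]
                group
              rw [this]
              exact mul_mem (mul_mem hw'H (Subgroup.subset_closure ⟨j, hjI, rfl⟩))
                (inv_mem hw'H)
            have : n₀ ≤ ℓ (x₀ * r) := by
              have hxr : x₀ * r = x * (w₀ * r) := by rw [hx₀, mul_assoc]
              rw [hxr]
              exact hmin _ (mul_mem hw₀H hrH)
            omega
          · -- s j a right inversion of w', contradiction
            have := (mem_rightInvSeq_iff cs hρred (cs.isReflection_simple j)).mp h2
            rw [hπρ] at this
            have hlw : ℓ (w' * s j) = ℓ w := by rw [← hsplit]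
            omega
  -- x is itself the minimal representative
  have hxx₀ : x = x₀ * w₀⁻¹ := by rw [hx₀]; group
  have hv : (w₀⁻¹ : W) ∈ H := inv_mem hw₀H
  have hxlen : ℓ x = ℓ x₀ + ℓ w₀⁻¹ := by
    conv_lhs => rw [hxx₀]
    exact key _ _ hv le_rfl
  have hw₀1 : w₀ = 1 := by
    by_contra hne
    have hne' : (w₀⁻¹ : W) ≠ 1 := fun h => hne (by rwa [inv_eq_one] at h)
    obtain ⟨v', j, hjI, hv'H, hsplit, hlen', _, _, _, _⟩ := parabolic_split cs I hv hne'
    have hv'eq : v' = w₀⁻¹ * s j := by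
      rw [hsplit, mul_assoc, cs.simple_mul_simple_self, mul_one]
    have hxj : x * s j = x₀ * v' := by
      rw [hv'eq, hx₀]
      group
    have h4 : ℓ (x * s j) = ℓ x₀ + ℓ v' := by rw [hxj]; exact key _ _ hv'H le_rfl
    have h5 := hx j hjI
    omega
  intro w hw
  have hk := key (ℓ w) w hw le_rfl
  rw [hx₀, hw₀1, mul_one] at hk
  exact hk

lemma length_lt_mul_parabolic (I : Set B) (x : W)
    (hx : ∀ i ∈ I, ℓ x < ℓ (x * s i)) {w : W}
    (hw : w ∈ Subgroup.closure (cs.simple '' I)) (hne : w ≠ 1) : ℓ x < ℓ (x * w) := by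
  have h1 := length_mul_parabolic_additive cs I x hx w hw
  have h2 : ℓ w ≠ 0 := fun h => hne (cs.length_eq_zero_iff.mp h)
  omega

end CoxAux

namespace CoxAux2

open CoxAux

variable {B : Type*} {W : Type*} [Group W] {M : CoxeterMatrix B} (cs : CoxeterSystem M W)

local prefix:100 "s" => cs.simple
local prefix:100 "π" => cs.wordProd
local prefix:100 "ℓ" => cs.length

lemma sgn_eq_one_of_parabolic (I : Set B) (x : W)
    (hx : ∀ i ∈ I, ℓ x < ℓ (x * s i)) {r : W} (hr : cs.IsReflection r)
    (hrH : r ∈ Subgroup.closure (cs.simple '' I)) : sgn cs x⁻¹ r = 1 := by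
  have hne : r ≠ 1 := by
    intro h
    have := hr.odd_length
    rw [h] at this
    simp at this
  have hlt := length_lt_mul_parabolic cs I x hx hrH hne
  have := isRightInversion_iff_sgn cs hr x
  rcases Int.units_eq_one_or (sgn cs x⁻¹ r) with h | h
  · exact h
  · rw [← this] at h; omega

lemma sgn_simple_eq_one (x : W) (i : B) (hxi : ℓ x < ℓ (x * s i)) :
    sgn cs x⁻¹ (s i) = 1 := by
  have := isRightInversion_iff_sgn cs (cs.isReflection_simple i) x
  rcases Int.units_eq_one_or (sgn cs x⁻¹ (s i)) with h | h
  · exact h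
  · rw [← this] at h; omega

/-- The key lemma: conjugation by a minimal coset representative preserves the
direction of Bruhat edges labelled by `I`. -/
lemma conj_step_iff (I : Set B) (x : W)
    (hx : ∀ i ∈ I, ℓ x < ℓ (x * s i)) {u : W}
    (hu : u ∈ Subgroup.closure (cs.simple '' I)) {i : B} (hi : i ∈ I) :
    ℓ u < ℓ (u * s i) ↔ ℓ (x * u * x⁻¹) < ℓ (x * u * x⁻¹ * (x * s i * x⁻¹)) := by
  set w := x * u * x⁻¹ with hw
  set t := x * s i * x⁻¹ with ht
  have htrefl : cs.IsReflection t := ⟨x, i, rfl⟩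
  have key : ℓ (w * t) < ℓ w ↔ ℓ (u * s i) < ℓ u := by
    rw [isRightInversion_iff_sgn cs htrefl w,
      isRightInversion_iff_sgn cs (cs.isReflection_simple i) u]
    have hw1 : w⁻¹ = x * (u⁻¹ * x⁻¹) := by rw [hw]; group
    have hxtx : x⁻¹ * t * x = s i := by rw [ht]; group
    rw [hw1, sgn_mul, hxtx, sgn_mul]
    have h1 : sgn cs x t = 1 := by
      rw [sgn_inv_conj cs x t, hxtx]
      exact sgn_simple_eq_one cs x i (hx i hi)
    have h2 : (u⁻¹)⁻¹ * s i * u⁻¹ = u * s i * u⁻¹ := by group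
    have h3 : sgn cs x⁻¹ (u * s i * u⁻¹) = 1 := by
      apply sgn_eq_one_of_parabolic cs I x hx ⟨u, i, rfl⟩
      exact mul_mem (mul_mem hu (Subgroup.subset_closure ⟨i, hi, rfl⟩)) (inv_mem hu)
    rw [h1, h2, h3, one_mul, mul_one]
  have hne1 : ℓ (w * t) ≠ ℓ w := htrefl.length_mul_left_ne w
  have hne2 : ℓ (u * s i) ≠ ℓ u := cs.length_mul_simple_ne u i
  constructor
  · intro h
    rcases Nat.lt_or_ge (ℓ (w * t)) (ℓ w) with h' | h'
    · rw [key] at h'; omega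
    · omega
  · intro h
    rcases Nat.lt_or_ge (ℓ (u * s i)) (ℓ u) with h' | h'
    · rw [← key] at h'; omega
    · omega

end CoxAux2



open CoxAux CoxAux2 in
open CoxeterSystem in
/-- For `I ⊆ S` and `x ∈ W^I` a minimal coset representative,
`x ⟨I⟩_{W_I} x⁻¹ = ⟨x I x⁻¹⟩`, where `⟨I⟩_{W_I}` is the Bruhat preclosure computed in the
standard parabolic subgroup `W_I`. -/
theorem conj_bclosure_parabolic
    {B : Type*} {W : Type*} [Group W] {M : CoxeterMatrix B} (cs : CoxeterSystem M W)
    (I : Set B) (x : W)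
    (hx : ∀ i ∈ I, cs.length x < cs.length (x * cs.simple i)) :
    (fun g => x * g * x⁻¹) ''
        cs.bclosureIn (Subgroup.closure (cs.simple '' I)) (cs.simple '' I)
      = cs.bclosure ((fun g => x * g * x⁻¹) '' (cs.simple '' I)) := by
  set H := Subgroup.closure (cs.simple '' I) with hH
  ext t'
  simp only [Set.mem_image]
  constructor
  · rintro ⟨t, ⟨htrefl, htH, hpath⟩, rfl⟩
    refine ⟨htrefl.conj x, ?_⟩
    have main : ∀ u : W,
        Relation.ReflTransGen (fun u v => u ∈ H ∧ v ∈ H ∧ cs.AStep (cs.simple '' I) u v) 1 u →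
        Relation.ReflTransGen (cs.AStep ((fun g => x * g * x⁻¹) '' (cs.simple '' I))) 1
          (x * u * x⁻¹) := by
      intro u hu
      induction hu with
      | refl =>
        have : x * 1 * x⁻¹ = 1 := by group
        rw [this]
      | @tail b c hb step ih =>
        obtain ⟨hbH, hcH, t₀, ht₀mem, ht₀refl, hceq, hlen⟩ := step
        obtain ⟨i, hiI, hti⟩ := ht₀mem
        subst hceq
        subst hti
        refine Relation.ReflTransGen.tail ih ?_
        refine ⟨x * cs.simple i * x⁻¹, ⟨cs.simple i, ⟨i, hiI, rfl⟩, rfl⟩,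
          (cs.isReflection_simple i).conj x, by group, ?_⟩
        have h1 : x * (b * cs.simple i) * x⁻¹ = x * b * x⁻¹ * (x * cs.simple i * x⁻¹) := by
          group
        rw [h1]
        exact (conj_step_iff cs I x hx hbH hiI).mp hlen
    exact main t hpath
  · rintro ⟨ht'refl, hpath⟩
    have main : ∀ v : W,
        Relation.ReflTransGen (cs.AStep ((fun g => x * g * x⁻¹) '' (cs.simple '' I))) 1 v →
        ∃ u ∈ H, v = x * u * x⁻¹ ∧
          Relation.ReflTransGen (fun u v => u ∈ H ∧ v ∈ H ∧ cs.AStep (cs.simple '' I) u v) 1 u := by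
      intro v hv
      induction hv with
      | refl => exact ⟨1, one_mem _, by group, Relation.ReflTransGen.refl⟩
      | @tail b c hb step ih =>
        obtain ⟨u, huH, hueq, hupath⟩ := ih
        obtain ⟨t₀, ht₀mem, ht₀refl, hceq, hlen⟩ := step
        obtain ⟨g, ⟨i, hiI, rfl⟩, rfl⟩ := ht₀mem
        subst hceq
        subst hueq
        have husH : u * cs.simple i ∈ H :=
          mul_mem huH (Subgroup.subset_closure ⟨i, hiI, rfl⟩)
        refine ⟨u * cs.simple i, husH, by group, ?_⟩
        refine Relation.ReflTransGen.tail hupath ?_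
        refine ⟨huH, husH, cs.simple i, ⟨i, hiI, rfl⟩, cs.isReflection_simple i, rfl, ?_⟩
        exact (conj_step_iff cs I x hx huH hiI).mpr hlen
    obtain ⟨u, huH, hueq, hupath⟩ := main t' hpath
    have hurefl : cs.IsReflection u := by
      have := ht'refl.conj x⁻¹
      have h2 : x⁻¹ * t' * (x⁻¹)⁻¹ = u := by rw [hueq]; group
      rwa [h2] at this
    exact ⟨u, ⟨hurefl, huH, hupath⟩, hueq.symm⟩
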